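/- Let p_X and p_g be probability density functions on a measurable space 𝕏 ⊆ ℝ^d (with Lebesgue measure μ) which are strictly positive on their common support, let k ≥ 1, let a, b, c ∈ [0,1] satisfy a − b = 2(c − b), and let D* = (a p_g + b p_X)/(p_g + p_X). Then the LkGAN generator loss evaluated at D* satisfies V_{k,g}(D*) := ∫ p_X |D* − c|^k dμ + ∫ p_g |D* − c|^k dμ = |c − b|^k · |χ|^k(p_X + p_g ∥ 2 p_g) ≥ 0, with equality if and only if p_g = p_X almost everywhere or c = b. -/

import Mathlib

open MeasureTheory Filter Topology Set

/-- LkGAN generator loss at the optimal discriminator.  Let `pX`, `pg` be probability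
densities on `𝕏 ⊆ ℝ^d` (Lebesgue measure), strictly positive on their common support
`X`, let `k ≥ 1`, `a, b, c ∈ [0,1]` with `a - b = 2(c - b)`, and let
`D* = (a pg + b pX)/(pg + pX)`.  Then
`V_{k,g}(D*) = ∫ pX |D* - c|^k + ∫ pg |D* - c|^k = |c - b|^k ⋅ |χ|^k(pX + pg ‖ 2 pg) ≥ 0`,
with equality iff `pg = pX` a.e. or `c = b`, where
`|χ|^k(f‖g) = ∫ |g - f|^k / f^(k-1) dμ` is the Pearson-Vajda divergence of order `k`. -/
theorem stmt_11 {d : ℕ}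
    (pX pg : (Fin d → ℝ) → ℝ) (X : Set (Fin d → ℝ)) (hX : MeasurableSet X)
    (hpX_meas : Measurable pX) (hpg_meas : Measurable pg)
    (hpX_nonneg : ∀ x, 0 ≤ pX x) (hpg_nonneg : ∀ x, 0 ≤ pg x)
    (hpX_pos : ∀ x ∈ X, 0 < pX x) (hpg_pos : ∀ x ∈ X, 0 < pg x)
    (hpX_int : IntegrableOn pX X) (hpg_int : IntegrableOn pg X)
    (hpX_one : ∫ x in X, pX x = 1) (hpg_one : ∫ x in X, pg x = 1)
    (k : ℝ) (hk : 1 ≤ k)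
    (a b c : ℝ) (ha : a ∈ Set.Icc (0 : ℝ) 1) (hb : b ∈ Set.Icc (0 : ℝ) 1)
    (hc : c ∈ Set.Icc (0 : ℝ) 1) (habc : a - b = 2 * (c - b)) :
    ∀ V PV : ℝ,
      V = (∫ x in X, pX x * |(a * pg x + b * pX x) / (pg x + pX x) - c| ^ k) +
          (∫ x in X, pg x * |(a * pg x + b * pX x) / (pg x + pX x) - c| ^ k) →
      PV = ∫ x in X, |2 * pg x - (pX x + pg x)| ^ k / (pX x + pg x) ^ (k - 1) →
      (V = |c - b| ^ k * PV ∧ 0 ≤ V ∧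
        (V = 0 ↔ pg =ᵐ[volume.restrict X] pX ∨ c = b)) := by
  intro V PV hV hPV
  have hk0 : k ≠ 0 := by linarith
  have hknn : 0 ≤ k := by linarith
  have ha' : a = 2 * c - b := by linarith
  set D : (Fin d → ℝ) → ℝ := fun x => |(a * pg x + b * pX x) / (pg x + pX x) - c| ^ k with hD
  set G : (Fin d → ℝ) → ℝ := fun x => |2 * pg x - (pX x + pg x)| ^ k / (pX x + pg x) ^ (k - 1) with hG
  -- pointwise facts on X
  have key : ∀ x ∈ X, pX x * D x + pg x * D x = |c - b| ^ k * G x := by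
    intro x hx
    have hs : 0 < pg x + pX x := add_pos (hpg_pos x hx) (hpX_pos x hx)
    have hDsub : (a * pg x + b * pX x) / (pg x + pX x) - c
        = (c - b) * (pg x - pX x) / (pg x + pX x) := by
      rw [ha']
      field_simp
      ring
    have habs : |(a * pg x + b * pX x) / (pg x + pX x) - c|
        = |c - b| * |pg x - pX x| / (pg x + pX x) := by
      rw [hDsub, abs_div, abs_mul, abs_of_pos hs]
    have hDx : D x = |c - b| ^ k * |pg x - pX x| ^ k / (pg x + pX x) ^ k := by
      rw [hD]
      simp only
      rw [habs, Real.div_rpow (by positivity) hs.le,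
        Real.mul_rpow (abs_nonneg _) (abs_nonneg _)]
    have hsk : (pg x + pX x) ^ k = (pg x + pX x) * (pg x + pX x) ^ (k - 1) := by
      have h1 : (pg x + pX x) ^ k = (pg x + pX x) ^ (1 + (k - 1)) := by ring_nf
      rw [h1, Real.rpow_add hs, Real.rpow_one]
    have h2 : 2 * pg x - (pX x + pg x) = pg x - pX x := by ring
    have hskm : (0:ℝ) < (pg x + pX x) ^ (k - 1) := Real.rpow_pos_of_pos hs _
    rw [hDx, hG]
    simp only [h2]
    have hcomm : pX x + pg x = pg x + pX x := by ring
    rw [hcomm, hsk]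
    field_simp
    ring
  -- bound on D
  have hDb : ∀ x ∈ X, D x ≤ |c - b| ^ k := by
    intro x hx
    have hs : 0 < pg x + pX x := add_pos (hpg_pos x hx) (hpX_pos x hx)
    have hDsub : (a * pg x + b * pX x) / (pg x + pX x) - c
        = (c - b) * (pg x - pX x) / (pg x + pX x) := by
      rw [ha']
      field_simp
      ring
    have habs : |(a * pg x + b * pX x) / (pg x + pX x) - c|
        = |c - b| * |pg x - pX x| / (pg x + pX x) := by
      rw [hDsub, abs_div, abs_mul, abs_of_pos hs]
    have h1 : |(a * pg x + b * pX x) / (pg x + pX x) - c| ≤ |c - b| := by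
      rw [habs]
      rw [div_le_iff₀ hs]
      have : |pg x - pX x| ≤ pg x + pX x := by
        rw [abs_le]
        constructor <;> nlinarith [hpg_nonneg x, hpX_nonneg x]
      nlinarith [abs_nonneg (c - b), abs_nonneg (pg x - pX x)]
    exact Real.rpow_le_rpow (abs_nonneg _) h1 hknn
  have hDnn : ∀ x, 0 ≤ D x := fun x => Real.rpow_nonneg (abs_nonneg _) _
  have hGnn : ∀ x, 0 ≤ G x := fun x =>
    div_nonneg (Real.rpow_nonneg (abs_nonneg _) _)
      (Real.rpow_nonneg (add_nonneg (hpX_nonneg x) (hpg_nonneg x)) _)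
  have hkm1 : (0:ℝ) ≤ k - 1 := by linarith
  have hDmeas : Measurable D :=
    (Real.continuous_rpow_const hknn).measurable.comp
      ((((hpg_meas.const_mul a).add (hpX_meas.const_mul b)).div
        (hpg_meas.add hpX_meas)).sub_const c).abs
  have hGmeas : Measurable G :=
    ((Real.continuous_rpow_const hknn).measurable.comp
        ((hpg_meas.const_mul 2).sub (hpX_meas.add hpg_meas)).abs).div
      ((Real.continuous_rpow_const hkm1).measurable.comp (hpX_meas.add hpg_meas))
  -- integrabilities
  have hint1 : IntegrableOn (fun x => pX x * D x) X := by
    apply Integrable.mono' (hpX_int.const_mul (|c - b| ^ k))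
      (hpX_meas.mul hDmeas).aestronglyMeasurable
    rw [ae_restrict_iff' hX]
    filter_upwards with x hx
    rw [Real.norm_eq_abs, Pi.mul_apply, abs_of_nonneg (mul_nonneg (hpX_nonneg x) (hDnn x))]
    calc pX x * D x ≤ pX x * |c - b| ^ k :=
          mul_le_mul_of_nonneg_left (hDb x hx) (hpX_nonneg x)
      _ = |c - b| ^ k * pX x := by ring
  have hint2 : IntegrableOn (fun x => pg x * D x) X := by
    apply Integrable.mono' (hpg_int.const_mul (|c - b| ^ k))
      (hpg_meas.mul hDmeas).aestronglyMeasurable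
    rw [ae_restrict_iff' hX]
    filter_upwards with x hx
    rw [Real.norm_eq_abs, Pi.mul_apply, abs_of_nonneg (mul_nonneg (hpg_nonneg x) (hDnn x))]
    calc pg x * D x ≤ pg x * |c - b| ^ k :=
          mul_le_mul_of_nonneg_left (hDb x hx) (hpg_nonneg x)
      _ = |c - b| ^ k * pg x := by ring
  have hGint : IntegrableOn G X := by
    apply Integrable.mono' (hpX_int.add hpg_int) hGmeas.aestronglyMeasurable
    rw [ae_restrict_iff' hX]
    filter_upwards with x hx
    have hs : 0 < pg x + pX x := add_pos (hpg_pos x hx) (hpX_pos x hx)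
    have hs' : 0 < pX x + pg x := by linarith
    have hskm : (0:ℝ) < (pX x + pg x) ^ (k - 1) := Real.rpow_pos_of_pos hs' _
    rw [Real.norm_eq_abs, abs_of_nonneg (hGnn x), hG]
    simp only
    rw [div_le_iff₀ hskm]
    have h2 : 2 * pg x - (pX x + pg x) = pg x - pX x := by ring
    have habs : |2 * pg x - (pX x + pg x)| ≤ pX x + pg x := by
      rw [h2, abs_le]
      constructor <;> nlinarith [hpg_nonneg x, hpX_nonneg x]
    calc |2 * pg x - (pX x + pg x)| ^ k ≤ (pX x + pg x) ^ k :=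
          Real.rpow_le_rpow (abs_nonneg _) habs hknn
      _ = (pX x + pg x) * (pX x + pg x) ^ (k - 1) := by
          rw [show k = 1 + (k - 1) by ring, Real.rpow_add hs', Real.rpow_one]
          ring_nf
  -- main identity
  have hVeq : V = |c - b| ^ k * PV := by
    rw [hV, hPV, ← integral_add hint1 hint2, ← integral_const_mul]
    exact setIntegral_congr_fun hX (fun x hx => key x hx)
  refine ⟨hVeq, ?_, ?_⟩
  · rw [hVeq, hPV]
    exact mul_nonneg (Real.rpow_nonneg (abs_nonneg _) _)
      (setIntegral_nonneg hX (fun x _ => hGnn x))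
  · constructor
    · intro hV0
      by_cases hcb : c = b
      · exact Or.inr hcb
      · left
        have hcb' : 0 < |c - b| := abs_pos.mpr (sub_ne_zero.mpr hcb)
        have hck : (0:ℝ) < |c - b| ^ k := Real.rpow_pos_of_pos hcb' _
        have hPV0 : PV = 0 := by
          rw [hVeq] at hV0
          rcases mul_eq_zero.mp hV0 with h | h
          · exact absurd h hck.ne'
          · exact h
        rw [hPV] at hPV0
        have hG0 : G =ᵐ[volume.restrict X] 0 := by
          rw [← MeasureTheory.integral_eq_zero_iff_of_nonneg (fun x => hGnn x) hGint]
          exact hPV0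
        filter_upwards [hG0, ae_restrict_mem hX] with x h0 hx
        have hs : 0 < pg x + pX x := add_pos (hpg_pos x hx) (hpX_pos x hx)
        have hs' : 0 < pX x + pg x := by linarith
        have hskm : (0:ℝ) < (pX x + pg x) ^ (k - 1) := Real.rpow_pos_of_pos hs' _
        have h0' : |2 * pg x - (pX x + pg x)| ^ k = 0 := by
          have h0'' : |2 * pg x - (pX x + pg x)| ^ k / (pX x + pg x) ^ (k - 1) = 0 := by
            exact h0
          rcases div_eq_zero_iff.mp h0'' with h | h
          · exact h
          · exact absurd h hskm.ne'
        have habs0 : |2 * pg x - (pX x + pg x)| = 0 := by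
          by_contra hne
          have : 0 < |2 * pg x - (pX x + pg x)| :=
            lt_of_le_of_ne (abs_nonneg _) (Ne.symm hne)
          exact absurd h0' (Real.rpow_pos_of_pos this k).ne'
        have : 2 * pg x - (pX x + pg x) = 0 := abs_eq_zero.mp habs0
        linarith
    · intro h
      rcases h with h | h
      · have hG0 : PV = 0 := by
          rw [hPV]
          rw [show (0:ℝ) = ∫ x in X, (0:ℝ) by simp]
          apply integral_congr_ae
          filter_upwards [h] with x hx
          have : 2 * pg x - (pX x + pg x) = 0 := by rw [hx]; ring
          simp [G, this, Real.zero_rpow hk0]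
        rw [hVeq, hG0, mul_zero]
      · rw [hVeq, h]
        simp [Real.zero_rpow hk0]
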